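/- Let H be a finite simple graph and let φ be a nonnegative real-valued function on V(H). Then there exists an independent set I of H such that the total weight ∑_{v∈V(H)} φ(v) is at most ∑_{v∈I} φ(v)·(d_H(v)+1), where d_H(v) is the degree of v in H. -/
import Mathlib


open Classical Finset

/-- An independent set of a simple graph: no edge joins two of its vertices. -/
def SimpleGraph.IsIndepFinset {V : Type*} (H : SimpleGraph V) (I : Finset V) : Prop :=
  ∀ v ∈ I, ∀ w ∈ I, ¬ H.Adj v w

private theorem wis_aux {V : Type*} [Fintype V] (H : SimpleGraph V)
    (φ : V → ℝ) (hφ : ∀ v, 0 ≤ φ v) (S : Finset V) :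
    ∃ I : Finset V, I ⊆ S ∧ H.IsIndepFinset I ∧
      ∑ v ∈ S, φ v ≤ ∑ v ∈ I, φ v * (H.degree v + 1) := by
  classical
  induction S using Finset.strongInduction with
  | _ S ih =>
    rcases S.eq_empty_or_nonempty with rfl | hS
    · exact ⟨∅, Finset.Subset.refl _, fun v hv => absurd hv (by simp), by simp⟩
    obtain ⟨v, hvS, hmax⟩ := S.exists_max_image φ hS
    set N : Finset V := insert v (H.neighborFinset v) with hN
    have hvN : v ∈ N := Finset.mem_insert_self _ _
    have hss : S \ N ⊂ S := by
      refine Finset.ssubset_iff_of_subset Finset.sdiff_subset |>.mpr ⟨v, hvS, ?_⟩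
      simp [hvN]
    obtain ⟨I', hI'sub, hI'ind, hI'sum⟩ := ih _ hss
    have hvI' : v ∉ I' := fun h => (Finset.mem_sdiff.mp (hI'sub h)).2 hvN
    refine ⟨insert v I', ?_, ?_, ?_⟩
    · intro x hx
      rcases Finset.mem_insert.mp hx with rfl | hx
      · exact hvS
      · exact Finset.sdiff_subset (hI'sub hx)
    · have hadj : ∀ z ∈ I', ¬ H.Adj v z := fun z hz h =>
        (Finset.mem_sdiff.mp (hI'sub hz)).2
          (Finset.mem_insert_of_mem (by simpa using h))
      intro x hx y hy hxy
      rcases Finset.mem_insert.mp hx with hx' | hx' <;>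
        rcases Finset.mem_insert.mp hy with hy' | hy'
      · exact H.irrefl (hx' ▸ hy' ▸ hxy)
      · exact hadj y hy' (hx' ▸ hxy)
      · exact hadj x hx' (hy' ▸ hxy).symm
      · exact hI'ind x hx' y hy' hxy
    · have hsplit : ∑ u ∈ S ∩ N, φ u + ∑ u ∈ S \ N, φ u = ∑ u ∈ S, φ u :=
        Finset.sum_inter_add_sum_sdiff S N φ
      have hcard : ((S ∩ N).card : ℝ) ≤ H.degree v + 1 := by
        have h1 : (S ∩ N).card ≤ N.card := Finset.card_le_card (Finset.inter_subset_right)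
        have h2 : N.card ≤ H.degree v + 1 := by
          rw [hN]
          simpa [SimpleGraph.card_neighborFinset_eq_degree] using
            Finset.card_insert_le v (H.neighborFinset v)
        have := le_trans h1 h2
        exact_mod_cast this
      have hbound : ∑ u ∈ S ∩ N, φ u ≤ φ v * (H.degree v + 1) := by
        calc ∑ u ∈ S ∩ N, φ u ≤ ∑ _u ∈ S ∩ N, φ v :=
              Finset.sum_le_sum fun u hu => hmax u (Finset.mem_of_mem_inter_left hu)
          _ = ((S ∩ N).card : ℝ) * φ v := by simp [mul_comm]
          _ ≤ (H.degree v + 1) * φ v := by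
              exact mul_le_mul_of_nonneg_right hcard (hφ v)
          _ = φ v * (H.degree v + 1) := mul_comm _ _
      rw [Finset.sum_insert hvI', ← hsplit]
      exact add_le_add hbound hI'sum

/-- for any nonnegative weight function φ on a finite simple graph H,
there is an independent set I with ∑_{v} φ(v) ≤ ∑_{v ∈ I} φ(v)·(d_H(v)+1). -/
theorem weighted_independent_set {V : Type*} [Fintype V] (H : SimpleGraph V)
    (φ : V → ℝ) (hφ : ∀ v, 0 ≤ φ v) :
    ∃ I : Finset V, H.IsIndepFinset I ∧
      ∑ v, φ v ≤ ∑ v ∈ I, φ v * (H.degree v + 1) := by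
  obtain ⟨I, _, hind, hsum⟩ := wis_aux H φ hφ Finset.univ
  exact ⟨I, hind, hsum⟩
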